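/- arXiv:2005.13771 — 5 statements merged into one kernel-verified Lean document; each statement's English description precedes it below -/
import Mathlib

section
/- (Characterization of the hard-thresholding operator.) Let m ≥ 1, s ∈ {1,…,m}, and α ∈ ℝ^m. A vector u ∈ ℝ^m satisfies u ∈ ℙ_s(α) if and only if there exists an index set T ⊆ {1,…,m} with |T| = s and |α_i| ≥ |α_j| for all i ∈ T and j ∉ T, such that u_i = α_i for all i ∈ T and u_j = 0 for all j ∉ T. -/
noncomputable section

open Finset Matrix

/-- Euclidean (ℓ₂) norm of a vector in ℝ^m. -/
def enorm {m : ℕ} (v : Fin m → ℝ) : ℝ := Real.sqrt (∑ i, (v i) ^ 2)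

/-- The zero "norm": number of nonzero entries. -/
def zeroNorm {m : ℕ} (α : Fin m → ℝ) : ℕ := {i | α i ≠ 0}.ncard

/-- The soft-margin loss ℓ_{cC}. -/
def softLoss (c C t : ℝ) : ℝ := if 0 ≤ t then C * t ^ 2 / 2 else c * t ^ 2 / 2

/-- The dual penalty h_{cC}. -/
def hLoss (c C t : ℝ) : ℝ := if 0 ≤ t then t ^ 2 / (2 * C) else t ^ 2 / (2 * c)

/-- The matrix Q whose j-th column is y_j · x_j. -/
def Qmat {m n : ℕ} (x : Fin m → Fin n → ℝ) (y : Fin m → ℝ) : Matrix (Fin n) (Fin m) ℝ :=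
  Matrix.of fun i j => y j * x j i

/-- The diagonal matrix E(α). -/
def Emat {m : ℕ} (c C : ℝ) (α : Fin m → ℝ) : Matrix (Fin m) (Fin m) ℝ :=
  Matrix.diagonal fun i => if 0 ≤ α i then 1 / C else 1 / c

/-- The Hessian H(α) = QᵀQ + E(α). -/
def Hmat {m n : ℕ} (c C : ℝ) (x : Fin m → Fin n → ℝ) (y : Fin m → ℝ) (α : Fin m → ℝ) :
    Matrix (Fin m) (Fin m) ℝ :=
  (Qmat x y)ᵀ * Qmat x y + Emat c C α

/-- The dual objective D(α) = (1/2)‖Qα‖² + (1/2)⟨E(α)α, α⟩ − ⟨1, α⟩. -/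
def Dfun {m n : ℕ} (c C : ℝ) (x : Fin m → Fin n → ℝ) (y : Fin m → ℝ) (α : Fin m → ℝ) : ℝ :=
  (1 / 2) * ∑ i, ((Qmat x y).mulVec α i) ^ 2
    + (1 / 2) * ∑ i, ((Emat c C α).mulVec α i) * α i
    - ∑ i, α i

/-- g(α, b) = H(α)α − 1 + b·y. -/
def gfun {m n : ℕ} (c C : ℝ) (x : Fin m → Fin n → ℝ) (y : Fin m → ℝ)
    (α : Fin m → ℝ) (b : ℝ) : Fin m → ℝ :=
  (Hmat c C x y α).mulVec α - (fun _ => (1 : ℝ)) + b • y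

/-- The hard-thresholding operator ℙ_s(α): minimizers of ‖u − α‖ over ‖u‖₀ ≤ s. -/
def hardThr {m : ℕ} (s : ℕ) (α : Fin m → ℝ) : Set (Fin m → ℝ) :=
  {u | zeroNorm u ≤ s ∧ ∀ v : Fin m → ℝ, zeroNorm v ≤ s → _root_.enorm (u - α) ≤ _root_.enorm (v - α)}

/-- Feasibility for the sparsity constrained problem (SSVM). -/
def feasible {m : ℕ} (y : Fin m → ℝ) (s : ℕ) (α : Fin m → ℝ) : Prop :=
  ∑ i, α i * y i = 0 ∧ zeroNorm α ≤ s

/-- (α, b) is an η-stationary point of (SSVM). -/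
def etaStat {m n : ℕ} (c C : ℝ) (x : Fin m → Fin n → ℝ) (y : Fin m → ℝ) (s : ℕ) (η : ℝ)
    (α : Fin m → ℝ) (b : ℝ) : Prop :=
  α ∈ hardThr s (α - η • gfun c C x y α b) ∧ ∑ i, α i * y i = 0

/-- The family T_s(α) of index sets of s largest entries in magnitude. -/
def Tsets {m : ℕ} (s : ℕ) (α : Fin m → ℝ) : Set (Finset (Fin m)) :=
  {T | T.card = s ∧ ∀ i ∈ T, ∀ j ∉ T, |α j| ≤ |α i|}

/-- The s-th largest entry of (|α₁|, …, |α_m|). -/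
def sthLargest {m : ℕ} (s : ℕ) (α : Fin m → ℝ) : ℝ :=
  sSup {t : ℝ | s ≤ {i | t ≤ |α i|}.ncard}

/-- Euclidean distance between pairs (α, b) and (α', b') in ℝ^m × ℝ. -/
def pairDist {m : ℕ} (α : Fin m → ℝ) (b : ℝ) (α' : Fin m → ℝ) (b' : ℝ) : ℝ :=
  Real.sqrt ((∑ i, (α i - α' i) ^ 2) + (b - b') ^ 2)

/-- Spectral (operator) norm of a matrix w.r.t. Euclidean norms. -/
def specNorm {m n : ℕ} (Q : Matrix (Fin n) (Fin m) ℝ) : ℝ :=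
  ‖LinearMap.toContinuousLinearMap (Matrix.toEuclideanLin Q)‖

namespace Stmt6Aux

variable {m : ℕ}

lemma zeroNorm_eq (u : Fin m → ℝ) :
    zeroNorm u = (Finset.univ.filter fun i => u i ≠ 0).card := by
  unfold zeroNorm
  rw [show {i | u i ≠ 0} = ↑(Finset.univ.filter fun i => u i ≠ 0) by ext i; simp,
    Set.ncard_coe_finset]

lemma sum_sq_mono (α : Fin m → ℝ) (T S : Finset (Fin m)) (hcard : S.card = T.card)
    (hT : ∀ i ∈ T, ∀ j ∉ T, |α j| ≤ |α i|) :
    ∑ j ∈ S, (α j) ^ 2 ≤ ∑ i ∈ T, (α i) ^ 2 := by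
  classical
  have h1 : (S \ T).card = (T \ S).card := by
    have h2 := Finset.card_sdiff_add_card_inter S T
    have h3 := Finset.card_sdiff_add_card_inter T S
    rw [Finset.inter_comm] at h3
    omega
  let e := Finset.equivOfCardEq h1
  have key : ∑ j ∈ S \ T, (α j) ^ 2 ≤ ∑ i ∈ T \ S, (α i) ^ 2 := by
    rw [← Finset.sum_coe_sort (S \ T) (fun j => (α j) ^ 2),
      ← Finset.sum_coe_sort (T \ S) (fun j => (α j) ^ 2),
      ← Equiv.sum_comp e (fun i : ((T \ S : Finset (Fin m)) : Type) => (α (i : Fin m)) ^ 2)]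
    apply Finset.sum_le_sum
    intro x _
    have hx : (x : Fin m) ∉ T := (Finset.mem_sdiff.mp x.2).2
    have he : ((e x : (T \ S : Finset (Fin m))) : Fin m) ∈ T := (Finset.mem_sdiff.mp (e x).2).1
    have h := hT _ he _ hx
    nlinarith [abs_nonneg (α (x : Fin m)), sq_abs (α (x : Fin m)), sq_abs (α ((e x : (T \ S : Finset (Fin m))) : Fin m))]
  have hS := Finset.sum_inter_add_sum_sdiff S T (fun j => (α j) ^ 2)
  have hT' := Finset.sum_inter_add_sum_sdiff T S (fun j => (α j) ^ 2)
  rw [Finset.inter_comm] at hT'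
  linarith

lemma max_majorizes (α : Fin m → ℝ) (s : ℕ) (T : Finset (Fin m)) (hT : T.card = s)
    (hmax : ∀ S : Finset (Fin m), S.card = s → ∑ j ∈ S, (α j) ^ 2 ≤ ∑ i ∈ T, (α i) ^ 2) :
    ∀ i ∈ T, ∀ j ∉ T, |α j| ≤ |α i| := by
  classical
  intro i hi j hj
  by_contra h
  push_neg at h
  have hji : j ∉ T.erase i := fun hc => hj (Finset.mem_of_mem_erase hc)
  have hcardpos : 1 ≤ T.card := Finset.card_pos.mpr ⟨i, hi⟩
  have hcard : (insert j (T.erase i)).card = s := by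
    rw [Finset.card_insert_of_notMem hji, Finset.card_erase_of_mem hi]
    omega
  have h1 := hmax _ hcard
  rw [Finset.sum_insert hji, Finset.sum_erase_eq_sub hi] at h1
  have h2 : (α i) ^ 2 < (α j) ^ 2 := by
    nlinarith [abs_nonneg (α i), sq_abs (α i), sq_abs (α j)]
  linarith

end Stmt6Aux

/-- characterization of the hard-thresholding operator. -/
theorem stmt_6 {m : ℕ} (hm : 1 ≤ m) (s : ℕ) (hs1 : 1 ≤ s) (hs2 : s ≤ m)
    (α : Fin m → ℝ) (u : Fin m → ℝ) :
    u ∈ hardThr s α ↔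
      ∃ T : Finset (Fin m), T.card = s ∧ (∀ i ∈ T, ∀ j ∉ T, |α j| ≤ |α i|) ∧
        (∀ i ∈ T, u i = α i) ∧ (∀ j ∉ T, u j = 0) := by
  classical
  set F : (Fin m → ℝ) → ℝ := fun v => ∑ i, (v i - α i) ^ 2 with hFdef
  have henorm : ∀ v w : Fin m → ℝ, (_root_.enorm (v - α) ≤ _root_.enorm (w - α) ↔ F v ≤ F w) := by
    intro v w
    unfold _root_.enorm
    simp only [Pi.sub_apply, hFdef]
    exact Real.sqrt_le_sqrt_iff (by positivity)
  -- value of F on a vector coinciding with α on T and 0 elsewhere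
  have hval : ∀ (T : Finset (Fin m)) (v : Fin m → ℝ), (∀ i ∈ T, v i = α i) →
      (∀ j ∉ T, v j = 0) → F v = ∑ j ∈ Tᶜ, (α j) ^ 2 := by
    intro T v h1 h2
    simp only [hFdef]
    rw [← Finset.sum_add_sum_compl T (fun i => (v i - α i) ^ 2)]
    have e1 : ∑ i ∈ T, (v i - α i) ^ 2 = 0 :=
      Finset.sum_eq_zero fun i hi => by rw [h1 i hi]; ring
    have e2 : ∑ j ∈ Tᶜ, (v j - α j) ^ 2 = ∑ j ∈ Tᶜ, (α j) ^ 2 :=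
      Finset.sum_congr rfl fun j hj => by
        rw [h2 j (Finset.mem_compl.mp hj)]; ring
    rw [e1, e2, zero_add]
  -- lower bound
  have hlower : ∀ v : Fin m → ℝ, zeroNorm v ≤ s → ∀ T : Finset (Fin m), T.card = s →
      (∀ i ∈ T, ∀ j ∉ T, |α j| ≤ |α i|) → ∑ j ∈ Tᶜ, (α j) ^ 2 ≤ F v := by
    intro v hv T hTcard hTmaj
    set S : Finset (Fin m) := Finset.univ.filter fun i => v i ≠ 0 with hSdef
    have hScard : S.card ≤ s := by rw [Stmt6Aux.zeroNorm_eq] at hv; exact hv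
    obtain ⟨S', hSS', -, hS'card⟩ :=
      Finset.exists_subsuperset_card_eq (Finset.subset_univ S) hScard
        (by rw [Finset.card_univ, Fintype.card_fin]; exact hs2)
    have hsum : ∑ j ∈ S', (α j) ^ 2 ≤ ∑ i ∈ T, (α i) ^ 2 :=
      Stmt6Aux.sum_sq_mono α T S' (by omega) hTmaj
    have hsplit := Finset.sum_add_sum_compl S' (fun i => (v i - α i) ^ 2)
    have hA : (0:ℝ) ≤ ∑ i ∈ S', (v i - α i) ^ 2 := Finset.sum_nonneg fun i _ => sq_nonneg _
    have hC : ∑ j ∈ S'ᶜ, (v j - α j) ^ 2 = ∑ j ∈ S'ᶜ, (α j) ^ 2 :=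
      Finset.sum_congr rfl fun j hj => by
        have hjS : j ∉ S := fun hc => Finset.mem_compl.mp hj (hSS' hc)
        have : v j = 0 := by
          by_contra hne
          exact hjS (by simp [hSdef, hne])
        rw [this]; ring
    have htot1 := Finset.sum_add_sum_compl S' (fun i => (α i) ^ 2)
    have htot2 := Finset.sum_add_sum_compl T (fun i => (α i) ^ 2)
    have hFv : F v = ∑ i ∈ S', (v i - α i) ^ 2 + ∑ j ∈ S'ᶜ, (α j) ^ 2 := by
      simp only [hFdef]; rw [← hsplit, hC]
    linarith
  -- maximal T exists
  obtain ⟨T0, hT0mem, hT0max⟩ := Finset.exists_max_image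
      (Finset.powersetCard s (Finset.univ : Finset (Fin m)))
      (fun T => ∑ i ∈ T, (α i) ^ 2)
      (by
        obtain ⟨t, ht, htc⟩ := Finset.exists_subset_card_eq
          (s := (Finset.univ : Finset (Fin m))) (n := s)
          (by rw [Finset.card_univ, Fintype.card_fin]; exact hs2)
        exact ⟨t, Finset.mem_powersetCard.mpr ⟨ht, htc⟩⟩)
  have hT0card : T0.card = s := (Finset.mem_powersetCard.mp hT0mem).2
  have hT0max' : ∀ S : Finset (Fin m), S.card = s →
      ∑ j ∈ S, (α j) ^ 2 ≤ ∑ i ∈ T0, (α i) ^ 2 := fun S hS =>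
    hT0max S (Finset.mem_powersetCard.mpr ⟨Finset.subset_univ S, hS⟩)
  have hT0maj := Stmt6Aux.max_majorizes α s T0 hT0card hT0max'
  constructor
  · rintro ⟨hu1, hu2⟩
    set S : Finset (Fin m) := Finset.univ.filter fun i => u i ≠ 0 with hSdef
    have hScard : S.card ≤ s := by rw [Stmt6Aux.zeroNorm_eq] at hu1; exact hu1
    obtain ⟨S', hSS', -, hS'card⟩ :=
      Finset.exists_subsuperset_card_eq (Finset.subset_univ S) hScard
        (by rw [Finset.card_univ, Fintype.card_fin]; exact hs2)
    have huS : ∀ j, j ∉ S → u j = 0 := by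
      intro j hj
      by_contra hne
      exact hj (by simp [hSdef, hne])
    -- comparison vector
    set u0 : Fin m → ℝ := fun i => if i ∈ T0 then α i else 0 with hu0def
    have hu0norm : zeroNorm u0 ≤ s := by
      rw [Stmt6Aux.zeroNorm_eq]
      refine le_trans (Finset.card_le_card ?_) (le_of_eq hT0card)
      intro i hi
      simp only [Finset.mem_filter, hu0def] at hi
      by_contra hc
      exact hi.2 (by simp [hc])
    have hFle : F u ≤ ∑ j ∈ T0ᶜ, (α j) ^ 2 := by
      rw [← hval T0 u0 (fun i hi => by simp [hu0def, hi]) (fun j hj => by simp [hu0def, hj])]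
      exact (henorm u u0).mp (hu2 u0 hu0norm)
    -- split F u at S'
    have hsplit := Finset.sum_add_sum_compl S' (fun i => (u i - α i) ^ 2)
    have hC : ∑ j ∈ S'ᶜ, (u j - α j) ^ 2 = ∑ j ∈ S'ᶜ, (α j) ^ 2 :=
      Finset.sum_congr rfl fun j hj => by
        rw [huS j (fun hc => Finset.mem_compl.mp hj (hSS' hc))]; ring
    have hFu : F u = ∑ i ∈ S', (u i - α i) ^ 2 + ∑ j ∈ S'ᶜ, (α j) ^ 2 := by
      simp only [hFdef]; rw [← hsplit, hC]
    have hA : (0:ℝ) ≤ ∑ i ∈ S', (u i - α i) ^ 2 := Finset.sum_nonneg fun i _ => sq_nonneg _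
    have htot1 := Finset.sum_add_sum_compl S' (fun i => (α i) ^ 2)
    have htot2 := Finset.sum_add_sum_compl T0 (fun i => (α i) ^ 2)
    have hS'le := hT0max' S' hS'card
    have hAzero : ∑ i ∈ S', (u i - α i) ^ 2 = 0 := by linarith
    have hS'eq : ∑ j ∈ S', (α j) ^ 2 = ∑ i ∈ T0, (α i) ^ 2 := by linarith
    have hS'maj : ∀ i ∈ S', ∀ j ∉ S', |α j| ≤ |α i| :=
      Stmt6Aux.max_majorizes α s S' hS'card fun S hS => hS'eq ▸ hT0max' S hS
    refine ⟨S', hS'card, hS'maj, ?_, fun j hj => huS j fun hc => hj (hSS' hc)⟩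
    intro i hi
    have := (Finset.sum_eq_zero_iff_of_nonneg fun i _ => sq_nonneg (u i - α i)).mp hAzero i hi
    have := pow_eq_zero_iff (n := 2) (by norm_num) |>.mp this
    linarith [this]
  · rintro ⟨T, hTcard, hTmaj, hTu, hTu0⟩
    constructor
    · rw [Stmt6Aux.zeroNorm_eq]
      refine le_trans (Finset.card_le_card ?_) (le_of_eq hTcard)
      intro i hi
      simp only [Finset.mem_filter] at hi
      by_contra hc
      exact hi.2 (hTu0 i hc)
    · intro v hv
      rw [henorm]
      rw [hval T u hTu hTu0]
      exact hlower v hv T hTcard hTmaj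
end
end

section
/- (Theorem 3, stationary equations.) Let η > 0 and (α*, b*) ∈ ℝ^m × ℝ. Then (α*, b*) is an η-stationary point of (SSVM) if and only if there exists an index set T* ⊆ {1,…,m} with |T*| = s and |(α* − η·g(α*,b*))_i| ≥ |(α* − η·g(α*,b*))_j| for all i ∈ T* and j ∉ T*, such that g_i(α*, b*) = 0 for all i ∈ T*, α*_j = 0 for all j ∉ T*, and Σ_{i∈T*} α*_i y_i = 0. -/
noncomputable section

open Finset Matrix

-- helpers

lemma zeroNorm_le_of_subset {m : ℕ} (v : Fin m → ℝ) (F : Finset (Fin m))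
    (h : ∀ k, v k ≠ 0 → k ∈ F) : zeroNorm v ≤ F.card := by
  calc zeroNorm v ≤ (↑F : Set (Fin m)).ncard :=
        Set.ncard_le_ncard (fun k hk => h k hk) F.finite_toSet
    _ = F.card := Set.ncard_coe_finset F

lemma enorm_le_enorm {m : ℕ} (u v : Fin m → ℝ)
    (h : ∑ i, (u i) ^ 2 ≤ ∑ i, (v i) ^ 2) : _root_.enorm u ≤ _root_.enorm v :=
  Real.sqrt_le_sqrt h

lemma sum_sq_le_of_enorm_le {m : ℕ} (u v : Fin m → ℝ)
    (h : _root_.enorm u ≤ _root_.enorm v) : ∑ i, (u i) ^ 2 ≤ ∑ i, (v i) ^ 2 := by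
  have hv : 0 ≤ ∑ i, (v i) ^ 2 := Finset.sum_nonneg fun i _ => sq_nonneg _
  exact (Real.sqrt_le_sqrt_iff hv).mp h

/-- Lemma A: the hard-thresholding vector attached to a top-s index set is a projection. -/
lemma proj_mem {m s : ℕ} (β : Fin m → ℝ) (T : Finset (Fin m)) (hT : T.card = s)
    (htop : ∀ i ∈ T, ∀ j ∉ T, |β j| ≤ |β i|) :
    (fun i => if i ∈ T then β i else 0) ∈ hardThr s β := by
  set u : Fin m → ℝ := fun i => if i ∈ T then β i else 0 with hu
  constructor
  · have := zeroNorm_le_of_subset u T (by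
      intro k hk
      by_contra hkT
      simp [hu, hkT] at hk)
    omega
  · intro v hv
    apply enorm_le_enorm
    set S : Finset (Fin m) := Finset.univ.filter (fun i => v i ≠ 0) with hS
    have hScard : S.card ≤ s := by
      have hset : {i | v i ≠ 0} = (↑S : Set (Fin m)) := by
        ext k; simp [hS]
      have : zeroNorm v = S.card := by
        rw [zeroNorm, hset, Set.ncard_coe_finset]
      omega
    -- LHS
    have hL : ∑ i, ((u - β) i) ^ 2 = ∑ j ∈ Tᶜ, (β j) ^ 2 := by
      rw [← Finset.sum_compl_add_sum T]
      have h1 : ∑ i ∈ T, ((u - β) i) ^ 2 = 0 := by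
        apply Finset.sum_eq_zero; intro i hi; simp [hu, hi]
      have h2 : ∑ j ∈ Tᶜ, ((u - β) j) ^ 2 = ∑ j ∈ Tᶜ, (β j) ^ 2 := by
        apply Finset.sum_congr rfl; intro j hj
        rw [Finset.mem_compl] at hj
        simp [hu, hj]
      rw [h1, h2, add_zero]
    -- RHS lower bound
    have hR : ∑ j ∈ Sᶜ, (β j) ^ 2 ≤ ∑ i, ((v - β) i) ^ 2 := by
      calc ∑ j ∈ Sᶜ, (β j) ^ 2 = ∑ j ∈ Sᶜ, ((v - β) j) ^ 2 := by
            apply Finset.sum_congr rfl; intro j hj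
            rw [Finset.mem_compl, hS, Finset.mem_filter] at hj
            have : v j = 0 := by by_contra h; exact hj ⟨Finset.mem_univ _, h⟩
            simp [this]
        _ ≤ ∑ i, ((v - β) i) ^ 2 :=
            Finset.sum_le_sum_of_subset_of_nonneg (Finset.subset_univ _)
              (fun i _ _ => sq_nonneg _)
    rw [hL]
    refine le_trans ?_ hR
    -- key combinatorial step: ∑_{Tᶜ} β² ≤ ∑_{Sᶜ} β²
    have hsplit1 : ∑ j ∈ Tᶜ, (β j) ^ 2
        = ∑ j ∈ Tᶜ ∩ Sᶜ, (β j) ^ 2 + ∑ j ∈ S \ T, (β j) ^ 2 := by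
      rw [← Finset.sum_inter_add_sum_sdiff Tᶜ Sᶜ]
      congr 1
      apply Finset.sum_congr _ (fun _ _ => rfl)
      ext k; simp [Finset.mem_sdiff, and_comm]
    have hsplit2 : ∑ j ∈ Sᶜ, (β j) ^ 2
        = ∑ j ∈ Tᶜ ∩ Sᶜ, (β j) ^ 2 + ∑ j ∈ T \ S, (β j) ^ 2 := by
      rw [← Finset.sum_inter_add_sum_sdiff Sᶜ Tᶜ]
      congr 1
      · apply Finset.sum_congr _ (fun _ _ => rfl)
        ext k; simp [and_comm]
      · apply Finset.sum_congr _ (fun _ _ => rfl)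
        ext k; simp [Finset.mem_sdiff, and_comm]
    rw [hsplit1, hsplit2]
    apply add_le_add le_rfl
    -- ∑_{S\T} β² ≤ ∑_{T\S} β²
    · 
      have hcard : (S \ T).card ≤ (T \ S).card := by
        have h1 : (S \ T).card + (S ∩ T).card = S.card := Finset.card_sdiff_add_card_inter S T
        have h2 : (T \ S).card + (T ∩ S).card = T.card := Finset.card_sdiff_add_card_inter T S
        have h3 : (S ∩ T).card = (T ∩ S).card := by rw [Finset.inter_comm]
        omega
      rcases Finset.eq_empty_or_nonempty (T \ S) with hTS | hTS
      · have h0 : (S \ T) = ∅ := Finset.card_eq_zero.mp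
          (by rw [hTS] at hcard; simpa using hcard)
        simp [h0, hTS]
      · obtain ⟨i₀, hi₀, hmin⟩ := Finset.exists_min_image (T \ S) (fun i => (β i)^2) hTS
        have hi₀T : i₀ ∈ T := (Finset.mem_sdiff.mp hi₀).1
        calc ∑ j ∈ S \ T, (β j) ^ 2 ≤ ∑ _j ∈ S \ T, (β i₀) ^ 2 := by
              apply Finset.sum_le_sum
              intro j hj
              have hjT : j ∉ T := (Finset.mem_sdiff.mp hj).2
              have := htop i₀ hi₀T j hjT
              calc (β j)^2 = |β j|^2 := (sq_abs _).symm
                _ ≤ |β i₀|^2 := by gcongr <;> exact abs_nonneg _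
                _ = (β i₀)^2 := sq_abs _
          _ = (S \ T).card • (β i₀) ^ 2 := by rw [Finset.sum_const]
          _ ≤ (T \ S).card • (β i₀) ^ 2 := by
              apply nsmul_le_nsmul_left (sq_nonneg _) hcard
          _ ≤ ∑ j ∈ T \ S, (β j) ^ 2 := Finset.card_nsmul_le_sum _ _ _ hmin

lemma sq_pos_of_ne' {a : ℝ} (h : a ≠ 0) : 0 < a ^ 2 :=
  lt_of_le_of_ne (sq_nonneg _) (Ne.symm (pow_ne_zero 2 h))

/-- Lemma B: any member of the hard-thresholding set comes from a top-s index set. -/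
lemma mem_proj {m s : ℕ} (hs : s ≤ m) (β α : Fin m → ℝ) (hα : α ∈ hardThr s β) :
    ∃ T : Finset (Fin m), T.card = s ∧ (∀ i ∈ T, ∀ j ∉ T, |β j| ≤ |β i|) ∧
      (∀ i ∈ T, α i = β i) ∧ (∀ j ∉ T, α j = 0) := by
  obtain ⟨hzn, hmin⟩ := hα
  set S : Finset (Fin m) := Finset.univ.filter (fun i => α i ≠ 0) with hS
  have hSmem : ∀ k, k ∈ S ↔ α k ≠ 0 := by intro k; simp [hS]
  have hScard : S.card ≤ s := by
    have hset : {i | α i ≠ 0} = (↑S : Set (Fin m)) := by ext k; simp [hS]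
    have : zeroNorm α = S.card := by rw [zeroNorm, hset, Set.ncard_coe_finset]
    omega
  -- Step 1: α agrees with β on S
  have step1 : ∀ i ∈ S, α i = β i := by
    intro i hi
    by_contra hne
    set v : Fin m → ℝ := fun k => if k ∈ S then β k else 0 with hv
    have hvz : zeroNorm v ≤ s := by
      refine le_trans (zeroNorm_le_of_subset v S ?_) hScard
      intro k hk
      by_contra hkS; simp [hv, hkS] at hk
    have hle := sum_sq_le_of_enorm_le _ _ (hmin v hvz)
    have hLa : ∑ k, ((α - β) k) ^ 2
        = ∑ k ∈ S, ((α - β) k) ^ 2 + ∑ j ∈ Sᶜ, (β j) ^ 2 := by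
      rw [← Finset.sum_add_sum_compl S]
      congr 1
      apply Finset.sum_congr rfl
      intro j hj
      rw [Finset.mem_compl, hSmem] at hj
      push_neg at hj
      rw [Pi.sub_apply, hj, zero_sub, neg_sq]
    have hLv : ∑ k, ((v - β) k) ^ 2 = ∑ j ∈ Sᶜ, (β j) ^ 2 := by
      rw [← Finset.sum_add_sum_compl S]
      have h1 : ∑ k ∈ S, ((v - β) k) ^ 2 = 0 :=
        Finset.sum_eq_zero fun k hk => by rw [Pi.sub_apply, hv]; simp [hk]
      have h2 : ∑ j ∈ Sᶜ, ((v - β) j) ^ 2 = ∑ j ∈ Sᶜ, (β j) ^ 2 := by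
        apply Finset.sum_congr rfl
        intro j hj
        rw [Finset.mem_compl] at hj
        rw [Pi.sub_apply, hv]
        simp [hj]
      rw [h1, h2, zero_add]
    rw [hLa, hLv] at hle
    have herase := Finset.add_sum_erase S (fun k => ((α - β) k) ^ 2) hi
    have hpos : 0 < ((α - β) i) ^ 2 := by
      apply sq_pos_of_ne'
      rw [Pi.sub_apply]
      exact sub_ne_zero.mpr hne
    have hsum : 0 ≤ ∑ k ∈ S.erase i, ((α - β) k) ^ 2 :=
      Finset.sum_nonneg fun _ _ => sq_nonneg _
    linarith
  -- Extend S to a set of cardinality s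
  obtain ⟨T, hST, hTcard⟩ := Finset.exists_superset_card_eq hScard (by simpa using hs)
  -- Step 2: β vanishes on T \ S
  have step2 : ∀ i ∈ T, i ∉ S → β i = 0 := by
    intro i hiT hiS
    by_contra hne
    have hSsub : S ⊆ T.erase i := fun k hk =>
      Finset.mem_erase.mpr ⟨fun he => hiS (he ▸ hk), hST hk⟩
    have hScard' : S.card ≤ s - 1 := by
      have h1 := Finset.card_le_card hSsub
      have h2 := Finset.card_erase_of_mem hiT
      omega
    have hs1 : 1 ≤ s := hTcard ▸ Finset.card_pos.mpr ⟨i, hiT⟩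
    set v : Fin m → ℝ := Function.update α i (β i) with hv
    have hαi : α i = 0 := by
      by_contra h; exact hiS ((hSmem i).mpr h)
    have hvz : zeroNorm v ≤ s := by
      have h0 : zeroNorm v ≤ (insert i S).card := by
        apply zeroNorm_le_of_subset
        intro k hk
        rcases eq_or_ne k i with rfl | hki
        · exact Finset.mem_insert_self _ _
        · apply Finset.mem_insert_of_mem
          rw [hSmem]
          rwa [hv, Function.update_of_ne hki] at hk
      have h1 := Finset.card_insert_le i S
      omega
    have hle := sum_sq_le_of_enorm_le _ _ (hmin v hvz)
    have key : ∑ k, ((v - β) k) ^ 2 + (β i)^2 = ∑ k, ((α - β) k) ^ 2 := by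
      rw [← Finset.add_sum_erase _ (fun k => ((v - β) k) ^ 2) (Finset.mem_univ i),
          ← Finset.add_sum_erase _ (fun k => ((α - β) k) ^ 2) (Finset.mem_univ i)]
      beta_reduce
      have e1 : ((v - β) i) ^ 2 = 0 := by
        rw [Pi.sub_apply, hv, Function.update_self]; ring
      have e2 : ((α - β) i) ^ 2 = (β i)^2 := by
        rw [Pi.sub_apply, hαi]; ring
      have e3 : ∑ k ∈ Finset.univ.erase i, ((v - β) k) ^ 2
          = ∑ k ∈ Finset.univ.erase i, ((α - β) k) ^ 2 := by
        apply Finset.sum_congr rfl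
        intro k hk
        have hki : k ≠ i := (Finset.mem_erase.mp hk).1
        rw [Pi.sub_apply, Pi.sub_apply, hv, Function.update_of_ne hki]
      rw [e1, e2, e3]; ring
    have hpos : 0 < (β i)^2 := sq_pos_of_ne' hne
    linarith
  have stepT : ∀ i ∈ T, α i = β i := by
    intro i hi
    by_cases hiS : i ∈ S
    · exact step1 i hiS
    · have h1 : α i = 0 := by by_contra h; exact hiS ((hSmem i).mpr h)
      rw [h1, step2 i hi hiS]
  -- Step 3: the top-s property
  have step3 : ∀ i ∈ T, ∀ j ∉ T, |β j| ≤ |β i| := by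
    intro i hiT j hjT
    have hij : j ≠ i := fun h => hjT (h ▸ hiT)
    have hαj : α j = 0 := by
      by_contra h
      exact hjT (hST ((hSmem j).mpr h))
    by_contra hgt
    push_neg at hgt
    have hs1 : 1 ≤ s := hTcard ▸ Finset.card_pos.mpr ⟨i, hiT⟩
    set v : Fin m → ℝ := Function.update (Function.update α i 0) j (β j) with hv
    have hvz : zeroNorm v ≤ s := by
      have h0 : zeroNorm v ≤ (insert j (T.erase i)).card := by
        apply zeroNorm_le_of_subset
        intro k hk
        rcases eq_or_ne k j with rfl | hkj
        · exact Finset.mem_insert_self _ _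
        · rw [hv, Function.update_of_ne hkj] at hk
          rcases eq_or_ne k i with rfl | hki
          · simp at hk
          · rw [Function.update_of_ne hki] at hk
            exact Finset.mem_insert_of_mem
              (Finset.mem_erase.mpr ⟨hki, hST ((hSmem k).mpr hk)⟩)
      have h1 := Finset.card_insert_le j (T.erase i)
      have h2 := Finset.card_erase_of_mem hiT
      omega
    have hle := sum_sq_le_of_enorm_le _ _ (hmin v hvz)
    have hji : i ∈ (Finset.univ.erase j) :=
      Finset.mem_erase.mpr ⟨hij.symm, Finset.mem_univ _⟩
    have key : ∑ k, ((v - β) k) ^ 2 + (β j)^2 = ∑ k, ((α - β) k) ^ 2 + (β i)^2 := by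
      rw [← Finset.add_sum_erase _ (fun k => ((v - β) k) ^ 2) (Finset.mem_univ j),
          ← Finset.add_sum_erase _ (fun k => ((α - β) k) ^ 2) (Finset.mem_univ j),
          ← Finset.add_sum_erase _ (fun k => ((v - β) k) ^ 2) hji,
          ← Finset.add_sum_erase _ (fun k => ((α - β) k) ^ 2) hji]
      beta_reduce
      have e1 : ((v - β) j) ^ 2 = 0 := by
        rw [Pi.sub_apply, hv, Function.update_self]; ring
      have e2 : ((α - β) j) ^ 2 = (β j)^2 := by
        rw [Pi.sub_apply, hαj]; ring
      have e3 : ((v - β) i) ^ 2 = (β i)^2 := by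
        rw [Pi.sub_apply, hv, Function.update_of_ne hij.symm, Function.update_self]
        ring
      have e4 : ((α - β) i) ^ 2 = 0 := by
        rw [Pi.sub_apply, stepT i hiT]; ring
      have e5 : ∑ k ∈ (Finset.univ.erase j).erase i, ((v - β) k) ^ 2
          = ∑ k ∈ (Finset.univ.erase j).erase i, ((α - β) k) ^ 2 := by
        apply Finset.sum_congr rfl
        intro k hk
        obtain ⟨hki, hk'⟩ := Finset.mem_erase.mp hk
        have hkj : k ≠ j := (Finset.mem_erase.mp hk').1
        rw [Pi.sub_apply, Pi.sub_apply, hv, Function.update_of_ne hkj,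
          Function.update_of_ne hki]
      rw [e1, e2, e3, e4, e5]; ring
    have hlt : (β i)^2 < (β j)^2 := by
      rw [← sq_abs (β i), ← sq_abs (β j)]
      exact pow_lt_pow_left₀ hgt (abs_nonneg _) (by norm_num)
    linarith
  exact ⟨T, hTcard, step3, stepT, fun j hj => by
    by_contra h; exact hj (hST ((hSmem j).mpr h))⟩


/-- stationary equations characterizing η-stationary points. -/
theorem stmt_7 {m n : ℕ} (hm : 1 ≤ m) (hn : 1 ≤ n) (c C : ℝ) (hc : 0 < c) (hcC : c < C)
    (x : Fin m → Fin n → ℝ) (y : Fin m → ℝ) (hy : ∀ i, y i = 1 ∨ y i = -1)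
    (s : ℕ) (hs1 : 1 ≤ s) (hs2 : s ≤ m) (η : ℝ) (hη : 0 < η)
    (αstar : Fin m → ℝ) (bstar : ℝ) :
    etaStat c C x y s η αstar bstar ↔
      ∃ Tstar ∈ Tsets s (αstar - η • gfun c C x y αstar bstar),
        (∀ i ∈ Tstar, gfun c C x y αstar bstar i = 0) ∧
        (∀ j ∉ Tstar, αstar j = 0) ∧
        (∑ i ∈ Tstar, αstar i * y i = 0) := by
  set g : Fin m → ℝ := gfun c C x y αstar bstar with hg
  set β : Fin m → ℝ := αstar - η • g with hβ
  have hβk : ∀ k, β k = αstar k - η * g k := fun k => by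
    rw [hβ, Pi.sub_apply, Pi.smul_apply, smul_eq_mul]
  constructor
  · rintro ⟨hproj, hfeas⟩
    obtain ⟨T, hTcard, htop, heq, hzero⟩ := mem_proj hs2 β αstar hproj
    refine ⟨T, ⟨hTcard, htop⟩, ?_, hzero, ?_⟩
    · intro i hi
      have h1 := heq i hi
      rw [hβk i] at h1
      have : η * g i = 0 := by linarith
      rcases mul_eq_zero.mp this with h | h
      · exact absurd h (ne_of_gt hη)
      · exact h
    · rw [← hfeas]
      apply Finset.sum_subset (Finset.subset_univ T)
      intro j _ hj
      rw [hzero j hj, zero_mul]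
  · rintro ⟨T, ⟨hTcard, htop⟩, hgz, hz, hsum⟩
    have hαeq : αstar = fun k => if k ∈ T then β k else 0 := by
      funext k
      by_cases hk : k ∈ T
      · rw [if_pos hk, hβk k, hgz k hk, mul_zero, sub_zero]
      · rw [if_neg hk]; exact hz k hk
    constructor
    · have hp := proj_mem β T hTcard htop
      rw [← hαeq] at hp
      exact hp
    · rw [← hsum]
      exact (Finset.sum_subset (Finset.subset_univ T)
        (fun j _ hj => by rw [hz j hj, zero_mul])).symm
end
end

section
/- (Theorem 4 a.) If (α*, b*) is an η-stationary point of (SSVM) for some η > 0, then α* is a local minimizer of (SSVM); that is, α* is feasible and there exists ε > 0 such that D(α*) ≤ D(α) for every feasible α with ‖α − α*‖ < ε. -/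
noncomputable section

open Finset Matrix

lemma enorm_sq_le {m : ℕ} {v w : Fin m → ℝ} (h : _root_.enorm v ≤ _root_.enorm w) :
    ∑ i, v i ^ 2 ≤ ∑ i, w i ^ 2 := by
  have h1 : (0:ℝ) ≤ ∑ i, v i ^ 2 := Finset.sum_nonneg fun i _ => sq_nonneg _
  have h2 : (0:ℝ) ≤ ∑ i, w i ^ 2 := Finset.sum_nonneg fun i _ => sq_nonneg _
  have := mul_self_le_mul_self (Real.sqrt_nonneg _) h
  simp only [_root_.enorm] at this
  rwa [Real.mul_self_sqrt h1, Real.mul_self_sqrt h2] at this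

lemma abs_le_enorm {m : ℕ} (v : Fin m → ℝ) (i : Fin m) : |v i| ≤ _root_.enorm v := by
  rw [← Real.sqrt_sq_eq_abs]
  exact Real.sqrt_le_sqrt (Finset.single_le_sum (fun j _ => sq_nonneg (v j)) (Finset.mem_univ i))

lemma zeroNorm_eq {m : ℕ} (α : Fin m → ℝ) :
    zeroNorm α = (Finset.univ.filter (fun i => α i ≠ 0)).card := by
  rw [zeroNorm, ← Set.ncard_coe_finset]
  congr 1; ext i; simp

lemma scalar_conv {c C : ℝ} (hc : 0 < c) (hcC : c < C) (t u : ℝ) :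
    (if 0 ≤ u then 1/C else 1/c) * u * (t - u) ≤
      (if 0 ≤ t then 1/C else 1/c) * t^2 / 2 - (if 0 ≤ u then 1/C else 1/c) * u^2 / 2 := by
  have hC : 0 < C := hc.trans hcC
  have hiC : (0:ℝ) < 1/C := by positivity
  have hic : (0:ℝ) < 1/c := by positivity
  have hle : (1:ℝ)/C ≤ 1/c := by
    apply one_div_le_one_div_of_le hc hcC.le
  split_ifs with h1 h2 h2
  · nlinarith [sq_nonneg (t - u)]
  · push_neg at h2
    nlinarith [mul_nonneg h1 (neg_nonneg.mpr h2.le), sq_nonneg (t - u),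
      mul_nonneg (sub_nonneg.mpr hle) (sq_nonneg t)]
  · push_neg at h1
    nlinarith [mul_nonneg h2 (neg_nonneg.mpr h1.le), sq_nonneg t, sq_nonneg u]
  · nlinarith [sq_nonneg (t - u)]

lemma cross_eq {m n : ℕ} (A : Matrix (Fin n) (Fin m) ℝ) (a d : Fin m → ℝ) :
    ∑ j, ((Aᵀ * A).mulVec a) j * d j = ∑ i, (A.mulVec a i) * (A.mulVec d i) := by
  calc ∑ j, ((Aᵀ * A).mulVec a) j * d j = ((Aᵀ * A).mulVec a) ⬝ᵥ d := rfl
    _ = (A.mulVec a) ⬝ᵥ (A.mulVec d) := by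
        rw [← Matrix.mulVec_mulVec, Matrix.mulVec_transpose, ← Matrix.dotProduct_mulVec]
    _ = ∑ i, (A.mulVec a i) * (A.mulVec d i) := rfl

lemma g_vanish {m n : ℕ} (c C : ℝ) (x : Fin m → Fin n → ℝ) (y : Fin m → ℝ)
    (s : ℕ) (η : ℝ) (hη : 0 < η) (αstar : Fin m → ℝ) (bstar : ℝ)
    (hst : αstar ∈ hardThr s (αstar - η • gfun c C x y αstar bstar))
    (i : Fin m) (hi : αstar i ≠ 0 ∨ zeroNorm αstar < s) :
    gfun c C x y αstar bstar i = 0 := by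
  obtain ⟨hcard, hmin⟩ := hst
  set g := gfun c C x y αstar bstar with hg
  set β := αstar - η • g with hβ
  set v := Function.update αstar i (β i) with hv
  have hvj : ∀ j, j ≠ i → v j = αstar j := fun j hj => Function.update_of_ne hj _ _
  have hvcard : zeroNorm v ≤ s := by
    rcases hi with hi | hi
    · refine le_trans (Set.ncard_le_ncard ?_ (Set.toFinite _)) hcard
      intro j hj
      rcases eq_or_ne j i with rfl | hne
      · exact hi
      · rw [Set.mem_setOf_eq, hvj j hne] at hj; exact hj
    · have hsub : {j | v j ≠ 0} ⊆ insert i {j | αstar j ≠ 0} := by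
        intro j hj
        rcases eq_or_ne j i with rfl | hne
        · exact Set.mem_insert _ _
        · rw [Set.mem_setOf_eq, hvj j hne] at hj
          exact Set.mem_insert_of_mem _ hj
      calc zeroNorm v ≤ (insert i {j | αstar j ≠ 0}).ncard :=
            Set.ncard_le_ncard hsub (Set.toFinite _)
        _ ≤ zeroNorm αstar + 1 := Set.ncard_insert_le _ _
        _ ≤ s := hi
  have hle := enorm_sq_le (hmin v hvcard)
  have e0 : (v - β) i = 0 := by simp [hv]
  have e1 : ∑ j, ((v - β) j) ^ 2 = ∑ j ∈ Finset.univ.erase i, ((αstar - β) j) ^ 2 := by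
    rw [← Finset.sum_erase Finset.univ (by rw [e0]; ring)]
    exact Finset.sum_congr rfl fun j hj => by
      rw [Pi.sub_apply, Pi.sub_apply, hvj j (Finset.ne_of_mem_erase hj)]
  have e2 : ∑ j, ((αstar - β) j) ^ 2
      = ((αstar - β) i) ^ 2 + ∑ j ∈ Finset.univ.erase i, ((αstar - β) j) ^ 2 :=
    (Finset.add_sum_erase _ _ (Finset.mem_univ i)).symm
  have hsq : ((αstar - β) i) ^ 2 ≤ 0 := by rw [e1] at hle; linarith [e2]
  have hzero : (αstar - β) i = 0 := by nlinarith [sq_nonneg ((αstar - β) i)]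
  have h' : (αstar - β) i = η * g i := by
    simp only [hβ, Pi.sub_apply, Pi.smul_apply, smul_eq_mul]; ring
  rw [h'] at hzero
  exact (mul_eq_zero.mp hzero).resolve_left (ne_of_gt hη)


lemma D_conv {m n : ℕ} (c C : ℝ) (hc : 0 < c) (hcC : c < C)
    (x : Fin m → Fin n → ℝ) (y : Fin m → ℝ) (αstar α : Fin m → ℝ) (b : ℝ)
    (hα : ∑ i, α i * y i = 0) (hαs : ∑ i, αstar i * y i = 0) :
    Dfun c C x y αstar + ∑ i, gfun c C x y αstar b i * (α i - αstar i)
      ≤ Dfun c C x y α := by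
  set A := Qmat x y with hA
  set d : Fin m → ℝ := fun i => α i - αstar i with hd
  set e : ℝ → ℝ := fun t => if 0 ≤ t then 1/C else 1/c with he
  have hEv : ∀ (γ : Fin m → ℝ) (i : Fin m),
      (Emat c C γ).mulVec γ i = e (γ i) * γ i := by
    intro γ i
    simp [Emat, Matrix.mulVec_diagonal, he]
  have hg : ∀ i, gfun c C x y αstar b i
      = ((Aᵀ * A).mulVec αstar) i + e (αstar i) * αstar i - 1 + b * y i := by
    intro i
    simp only [gfun, Hmat, Matrix.add_mulVec, Pi.add_apply, Pi.sub_apply,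
      Pi.smul_apply, smul_eq_mul, hEv, hA]
  have hαdec : α = αstar + d := by funext j; simp [hd]
  have hmv : ∀ i, A.mulVec α i = A.mulVec αstar i + A.mulVec d i := by
    intro i; rw [hαdec, Matrix.mulVec_add]; rfl
  have expand : ∑ i, (A.mulVec α i) ^ 2
      = ∑ i, (A.mulVec αstar i) ^ 2 + 2 * (∑ j, ((Aᵀ * A).mulVec αstar) j * d j)
        + ∑ i, (A.mulVec d i) ^ 2 := by
    rw [cross_eq]
    calc ∑ i, (A.mulVec α i) ^ 2
        = ∑ i, ((A.mulVec αstar i) ^ 2 + 2 * ((A.mulVec αstar i) * (A.mulVec d i))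
            + (A.mulVec d i) ^ 2) :=
          Finset.sum_congr rfl fun i _ => by rw [hmv i]; ring
      _ = _ := by
          rw [Finset.sum_add_distrib, Finset.sum_add_distrib, ← Finset.mul_sum]
  have eDα : Dfun c C x y α
      = (1/2) * (∑ i, (A.mulVec αstar i) ^ 2
          + 2 * (∑ j, ((Aᵀ * A).mulVec αstar) j * d j) + ∑ i, (A.mulVec d i) ^ 2)
        + (1/2) * ∑ i, e (α i) * (α i) ^ 2 - ∑ i, α i := by
    have hEsum : ∑ i, (Emat c C α).mulVec α i * α i = ∑ i, e (α i) * (α i) ^ 2 :=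
      Finset.sum_congr rfl fun i _ => by rw [hEv]; ring
    rw [Dfun, ← hA, expand, hEsum]
  have eDαs : Dfun c C x y αstar
      = (1/2) * ∑ i, (A.mulVec αstar i) ^ 2
        + (1/2) * ∑ i, e (αstar i) * (αstar i) ^ 2 - ∑ i, αstar i := by
    have hEsum : ∑ i, (Emat c C αstar).mulVec αstar i * αstar i
        = ∑ i, e (αstar i) * (αstar i) ^ 2 :=
      Finset.sum_congr rfl fun i _ => by rw [hEv]; ring
    rw [Dfun, ← hA, hEsum]
  have eG : ∑ i, gfun c C x y αstar b i * d i
      = (∑ j, ((Aᵀ * A).mulVec αstar) j * d j) + ∑ i, e (αstar i) * αstar i * d i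
        - (∑ i, α i - ∑ i, αstar i) + b * ∑ i, y i * d i := by
    calc ∑ i, gfun c C x y αstar b i * d i
        = ∑ i, (((Aᵀ * A).mulVec αstar) i * d i + e (αstar i) * αstar i * d i
            + b * (y i * d i) - d i) :=
          Finset.sum_congr rfl fun i _ => by rw [hg i]; ring
      _ = _ := by
          rw [Finset.sum_sub_distrib, Finset.sum_add_distrib, Finset.sum_add_distrib,
            ← Finset.mul_sum]
          have : ∑ i, d i = ∑ i, α i - ∑ i, αstar i := by
            rw [← Finset.sum_sub_distrib]
          rw [this]; ring
  have hSY : ∑ i, y i * d i = 0 := by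
    have : ∑ i, y i * d i = (∑ i, α i * y i) - ∑ i, αstar i * y i := by
      rw [← Finset.sum_sub_distrib]
      exact Finset.sum_congr rfl fun i _ => by simp [hd]; ring
    rw [this, hα, hαs]; ring
  have hpt : ∑ i, e (αstar i) * αstar i * d i
      ≤ (1/2) * ∑ i, e (α i) * (α i) ^ 2 - (1/2) * ∑ i, e (αstar i) * (αstar i) ^ 2 := by
    have h1 : ∑ i, e (αstar i) * αstar i * d i
        ≤ ∑ i, (e (α i) * (α i) ^ 2 / 2 - e (αstar i) * (αstar i) ^ 2 / 2) := by
      refine Finset.sum_le_sum fun i _ => ?_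
      have := scalar_conv hc hcC (α i) (αstar i)
      simpa [he, hd] using this
    rw [Finset.sum_sub_distrib] at h1
    have h2 : ∑ i, e (α i) * (α i) ^ 2 / 2 = (1/2) * ∑ i, e (α i) * (α i) ^ 2 := by
      rw [Finset.mul_sum]; exact Finset.sum_congr rfl fun i _ => by ring
    have h3 : ∑ i, e (αstar i) * (αstar i) ^ 2 / 2
        = (1/2) * ∑ i, e (αstar i) * (αstar i) ^ 2 := by
      rw [Finset.mul_sum]; exact Finset.sum_congr rfl fun i _ => by ring
    linarith [h1, h2.symm ▸ h1]
  have hSQd : (0:ℝ) ≤ ∑ i, (A.mulVec d i) ^ 2 :=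
    Finset.sum_nonneg fun i _ => sq_nonneg _
  have hGd : ∑ i, gfun c C x y αstar b i * (α i - αstar i)
      = ∑ i, gfun c C x y αstar b i * d i := rfl
  rw [hGd]
  rw [eG, eDα, eDαs, hSY]
  linarith [hpt, hSQd]

/-- an η-stationary point is a local minimizer of (SSVM). -/
theorem stmt_8 {m n : ℕ} (hm : 1 ≤ m) (hn : 1 ≤ n) (c C : ℝ) (hc : 0 < c) (hcC : c < C)
    (x : Fin m → Fin n → ℝ) (y : Fin m → ℝ) (hy : ∀ i, y i = 1 ∨ y i = -1)
    (s : ℕ) (hs1 : 1 ≤ s) (hs2 : s ≤ m) (η : ℝ) (hη : 0 < η)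
    (αstar : Fin m → ℝ) (bstar : ℝ)
    (hst : etaStat c C x y s η αstar bstar) :
    feasible y s αstar ∧
      ∃ ε > (0 : ℝ), ∀ α : Fin m → ℝ, feasible y s α → _root_.enorm (α - αstar) < ε →
        Dfun c C x y αstar ≤ Dfun c C x y α := by
  obtain ⟨⟨hcard, hmin⟩, hfeaseq⟩ := hst
  refine ⟨⟨hfeaseq, hcard⟩, ?_⟩
  have hgv := g_vanish c C x y s η hη αstar bstar ⟨hcard, hmin⟩
  rcases lt_or_eq_of_le hcard with hlt | heq
  · refine ⟨1, one_pos, fun α hαf _ => ?_⟩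
    have h0 : ∑ i, gfun c C x y αstar bstar i * (α i - αstar i) = 0 :=
      Finset.sum_eq_zero fun i _ => by rw [hgv i (Or.inr hlt)]; ring
    have hD := D_conv c C hc hcC x y αstar α bstar hαf.1 hfeaseq
    rw [h0] at hD
    linarith
  · set S := Finset.univ.filter (fun i => αstar i ≠ 0) with hS
    have hScard : S.card = s := by rw [hS, ← zeroNorm_eq]; exact heq
    have hSne : S.Nonempty := Finset.card_pos.mp (by rw [hScard]; exact hs1)
    set ε := S.inf' hSne (fun i => |αstar i|) with hε
    have hεpos : 0 < ε := by
      rw [hε, Finset.lt_inf'_iff]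
      intro i hi
      exact abs_pos.mpr (Finset.mem_filter.mp hi).2
    refine ⟨ε, hεpos, fun α hαf hnear => ?_⟩
    have hsupp : ∀ i, αstar i ≠ 0 → α i ≠ 0 := by
      intro i hi hcon
      have h1 : |(α - αstar) i| ≤ _root_.enorm (α - αstar) := abs_le_enorm _ i
      have h2 : ε ≤ |αstar i| :=
        Finset.inf'_le _ (Finset.mem_filter.mpr ⟨Finset.mem_univ i, hi⟩)
      have h3 : |(α - αstar) i| = |αstar i| := by
        rw [Pi.sub_apply, hcon, zero_sub, abs_neg]
      linarith
    have hsets : {i | αstar i ≠ 0} = {i | α i ≠ 0} := by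
      refine Set.eq_of_subset_of_ncard_le (fun i hi => hsupp i hi) ?_ (Set.toFinite _)
      calc {i | α i ≠ 0}.ncard = zeroNorm α := rfl
        _ ≤ s := hαf.2
        _ = zeroNorm αstar := heq.symm
        _ = {i | αstar i ≠ 0}.ncard := rfl
    have hz : ∀ i, αstar i = 0 → α i = 0 := by
      intro i hi
      by_contra hcon
      have hmem : i ∈ {j | α j ≠ 0} := hcon
      rw [← hsets] at hmem
      exact hmem hi
    have h0 : ∑ i, gfun c C x y αstar bstar i * (α i - αstar i) = 0 :=
      Finset.sum_eq_zero fun i _ => by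
        by_cases hi : αstar i = 0
        · rw [hz i hi, hi]; ring
        · rw [hgv i (Or.inl hi)]; ring
    have hD := D_conv c C hc hcC x y αstar α bstar hαf.1 hfeaseq
    rw [h0] at hD
    linarith
end
end

section
/- (Theorem 4 c.) If (α*, b*) is an η-stationary point of (SSVM) for some η > 0 and ‖α*‖₀ < s, then α* is the unique global minimizer of (SSVM): D(α*) ≤ D(α) for every feasible α, and any feasible α with D(α) = D(α*) equals α*. -/
noncomputable section

open Finset Matrix

private lemma key_scalar {a b u t : ℝ} (ha : 0 < a) (hab : a ≤ b) :
    (if 0 ≤ u then a else b) * u * u / 2 + (if 0 ≤ u then a else b) * u * (t - u)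
      + a * (t - u) ^ 2 / 2 ≤ (if 0 ≤ t then a else b) * t * t / 2 := by
  by_cases hu : 0 ≤ u <;> by_cases ht : 0 ≤ t <;>
    simp only [hu, ht, if_pos, if_neg, not_false_iff] <;> try push_neg at *
  · nlinarith [sq_nonneg (t - u)]
  · nlinarith [mul_nonneg (sub_nonneg.2 hab) (sq_nonneg t)]
  · nlinarith [mul_nonneg (sub_nonneg.2 hab) (sq_nonneg u),
      mul_nonneg (mul_nonneg (sub_nonneg.2 hab) (neg_nonneg.2 hu.le)) ht]
  · nlinarith [mul_nonneg (sub_nonneg.2 hab) (sq_nonneg (t - u))]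

/-- an η-stationary point with ‖α*‖₀ < s is the unique global minimizer. -/
theorem stmt_11 {m n : ℕ} (hm : 1 ≤ m) (hn : 1 ≤ n) (c C : ℝ) (hc : 0 < c) (hcC : c < C)
    (x : Fin m → Fin n → ℝ) (y : Fin m → ℝ) (hy : ∀ i, y i = 1 ∨ y i = -1)
    (s : ℕ) (hs1 : 1 ≤ s) (hs2 : s ≤ m) (η : ℝ) (hη : 0 < η)
    (αstar : Fin m → ℝ) (bstar : ℝ)
    (hst : etaStat c C x y s η αstar bstar) (hz : zeroNorm αstar < s) :
    (∀ α : Fin m → ℝ, feasible y s α → Dfun c C x y αstar ≤ Dfun c C x y α) ∧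
      (∀ α : Fin m → ℝ, feasible y s α → Dfun c C x y α = Dfun c C x y αstar → α = αstar) := by
  classical
  have hC : 0 < C := hc.trans hcC
  have ha : (0:ℝ) < 1/C := by positivity
  have hab : (1:ℝ)/C ≤ 1/c := one_div_le_one_div_of_le hc hcC.le
  -- Step 1: the gradient vanishes
  have hg0 : gfun c C x y αstar bstar = 0 := by
    by_contra hne
    obtain ⟨i, hi⟩ : ∃ i, gfun c C x y αstar bstar i ≠ 0 := by
      by_contra h; push_neg at h; exact hne (funext h)
    set g := gfun c C x y αstar bstar with hgdef
    obtain ⟨h1, h2⟩ := hst.1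
    set β := αstar - η • g with hβ
    set v := Function.update αstar i (β i) with hv
    have hvz : zeroNorm v ≤ s := by
      have hsub : {j | v j ≠ 0} ⊆ insert i {j | αstar j ≠ 0} := by
        intro j hj
        rcases eq_or_ne j i with hji | hji
        · simp [hji]
        · exact Set.mem_insert_of_mem _
            (by simpa [hv, Function.update_of_ne hji] using hj)
      calc zeroNorm v ≤ (insert i {j | αstar j ≠ 0}).ncard :=
            Set.ncard_le_ncard hsub (Set.toFinite _)
        _ ≤ {j | αstar j ≠ 0}.ncard + 1 := Set.ncard_insert_le _ _
        _ ≤ s := hz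
    have hle := h2 v hvz
    have hne0 : η * g i ≠ 0 := mul_ne_zero (ne_of_gt hη) hi
    have hαβ : ∀ j, αstar j - β j = η * g j := by
      intro j; simp [hβ]
    have hsum : ∑ j, (v j - β j) ^ 2 < ∑ j, (αstar j - β j) ^ 2 := by
      apply Finset.sum_lt_sum
      · intro j _
        rcases eq_or_ne j i with hji | hji
        · subst hji; simp [hv]; positivity
        · simp [hv, Function.update_of_ne hji]
      · refine ⟨i, Finset.mem_univ _, ?_⟩
        have hvi : v i - β i = 0 := by simp [hv]
        rw [hvi, hαβ i]
        have h2' : (η * g i) ^ 2 ≠ 0 := pow_ne_zero _ hne0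
        have := (sq_nonneg (η * g i)).lt_of_ne (Ne.symm h2')
        simpa using this
    have hlt : _root_.enorm (v - β) < _root_.enorm (αstar - β) := by
      unfold _root_.enorm
      apply Real.sqrt_lt_sqrt (Finset.sum_nonneg fun j _ => sq_nonneg _)
      simpa using hsum
    exact absurd hle (not_le.2 hlt)
  -- Step 2: first-order condition componentwise
  set e : Fin m → ℝ := fun i => if 0 ≤ αstar i then 1/C else 1/c with he
  have hF1 : ∀ i, (((Qmat x y)ᵀ * Qmat x y).mulVec αstar) i
      = 1 - bstar * y i - e i * αstar i := by
    intro i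
    have h0 := congrFun hg0 i
    simp only [gfun, Hmat, Matrix.add_mulVec, Emat, Matrix.mulVec_diagonal,
      Pi.add_apply, Pi.sub_apply, Pi.smul_apply, smul_eq_mul, Pi.zero_apply] at h0
    simp only [he]
    linarith
  -- middle term rewriting
  have hmid : ∀ (v : Fin m → ℝ),
      (1/2 : ℝ) * ∑ i, ((Emat c C v).mulVec v i) * v i
        = ∑ i, ((if 0 ≤ v i then 1/C else 1/c) * v i * v i / 2) := by
    intro v
    rw [Finset.mul_sum]
    exact Finset.sum_congr rfl fun i _ => by
      simp only [Emat, Matrix.mulVec_diagonal]; ring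
  have hD : ∀ (v : Fin m → ℝ), Dfun c C x y v
      = (1/2) * ∑ i, ((Qmat x y).mulVec v i)^2
        + ∑ i, ((if 0 ≤ v i then 1/C else 1/c) * v i * v i / 2) - ∑ i, v i := by
    intro v
    unfold Dfun
    rw [hmid]
  -- Step 3: the master inequality
  have master : ∀ α : Fin m → ℝ, feasible y s α →
      Dfun c C x y αstar + (1/(2*C)) * ∑ i, (α i - αstar i)^2 ≤ Dfun c C x y α := by
    intro α hα
    set δ : Fin m → ℝ := fun i => α i - αstar i with hδ
    have hgoalδ : ∑ i, (α i - αstar i)^2 = ∑ i, (δ i)^2 := rfl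
    have hQδ : (Qmat x y).mulVec α = (Qmat x y).mulVec αstar + (Qmat x y).mulVec δ := by
      have hαδ : α = αstar + δ := funext fun j => by simp [hδ]
      rw [hαδ, Matrix.mulVec_add]
    have hSplit : ∑ i, ((Qmat x y).mulVec α i)^2
        = ∑ i, ((Qmat x y).mulVec αstar i)^2
          + 2 * ∑ i, ((Qmat x y).mulVec αstar i * (Qmat x y).mulVec δ i)
          + ∑ i, ((Qmat x y).mulVec δ i)^2 := by
      rw [hQδ, Finset.mul_sum, ← Finset.sum_add_distrib, ← Finset.sum_add_distrib]
      exact Finset.sum_congr rfl fun i _ => by simp [Pi.add_apply]; ring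
    have hcross : ∑ i, ((Qmat x y).mulVec αstar i * (Qmat x y).mulVec δ i)
        = ∑ i, ((1 - bstar * y i - e i * αstar i) * δ i) := by
      have h1 : ((Qmat x y).mulVec αstar) ⬝ᵥ ((Qmat x y).mulVec δ)
          = (((Qmat x y)ᵀ * Qmat x y).mulVec αstar) ⬝ᵥ δ := by
        rw [Matrix.dotProduct_mulVec, ← Matrix.mulVec_transpose, Matrix.mulVec_mulVec]
      simp only [dotProduct] at h1
      rw [h1]
      exact Finset.sum_congr rfl fun i _ => by rw [hF1 i]
    have hexp : ∑ i, ((1 - bstar * y i - e i * αstar i) * δ i)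
        = ∑ i, δ i - bstar * ∑ i, (δ i * y i) - ∑ i, (e i * αstar i * δ i) := by
      rw [Finset.mul_sum, ← Finset.sum_sub_distrib, ← Finset.sum_sub_distrib]
      exact Finset.sum_congr rfl fun i _ => by ring
    have hyδ : ∑ i, (δ i * y i) = 0 := by
      have h2 : ∑ i, (δ i * y i) = ∑ i, (α i * y i) - ∑ i, (αstar i * y i) := by
        rw [← Finset.sum_sub_distrib]
        exact Finset.sum_congr rfl fun i _ => by simp only [hδ]; ring
      rw [h2, hα.1, hst.2]; ring
    have hTδ : ∑ i, δ i = ∑ i, α i - ∑ i, αstar i := by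
      rw [← Finset.sum_sub_distrib]
    rw [hyδ, mul_zero, sub_zero] at hexp
    have hkeysum : ∑ i, (e i * αstar i * αstar i / 2 + e i * αstar i * δ i
          + (1/C) * (δ i) ^ 2 / 2)
        ≤ ∑ i, ((if 0 ≤ α i then 1/C else 1/c) * α i * α i / 2) := by
      apply Finset.sum_le_sum
      intro i _
      simp only [he, hδ]
      exact key_scalar ha hab
    have hkeysplit : ∑ i, (e i * αstar i * αstar i / 2 + e i * αstar i * δ i
          + (1/C) * (δ i) ^ 2 / 2)
        = ∑ i, (e i * αstar i * αstar i / 2) + ∑ i, (e i * αstar i * δ i)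
          + (1/(2*C)) * ∑ i, (δ i)^2 := by
      rw [Finset.sum_add_distrib, Finset.sum_add_distrib, Finset.mul_sum]
      congr 1
      exact Finset.sum_congr rfl fun i _ => by ring
    have hSδ : 0 ≤ ∑ i, ((Qmat x y).mulVec δ i)^2 :=
      Finset.sum_nonneg fun i _ => sq_nonneg _
    have hDα := hD α
    have hDs := hD αstar
    have hestar : ∑ i, ((if 0 ≤ αstar i then 1/C else 1/c) * αstar i * αstar i / 2)
        = ∑ i, (e i * αstar i * αstar i / 2) := by
      exact Finset.sum_congr rfl fun i _ => by simp only [he]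
    rw [hestar] at hDs
    rw [hgoalδ]
    linarith [hkeysum]
  refine ⟨fun α hα => ?_, fun α hα hEq => ?_⟩
  · have h1 := master α hα
    have h2 : 0 ≤ (1/(2*C)) * ∑ i, (α i - αstar i)^2 := by
      apply mul_nonneg (by positivity)
      exact Finset.sum_nonneg fun i _ => sq_nonneg _
    linarith
  · have h1 := master α hα
    have hSnn : 0 ≤ ∑ i, (α i - αstar i)^2 :=
      Finset.sum_nonneg fun i _ => sq_nonneg _
    have hpos : (0:ℝ) < 1/(2*C) := by positivity
    have hS0 : ∑ i, (α i - αstar i)^2 = 0 := by nlinarith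
    funext i
    have := (Finset.sum_eq_zero_iff_of_nonneg (fun i _ => sq_nonneg (α i - αstar i))).1
      hS0 i (Finset.mem_univ i)
    have := pow_eq_zero_iff (n := 2) (by norm_num) |>.1 this
    linarith [this]
end
end

section
/- (Lemma 2 b.) Let (α*, b*) be an η-stationary point of (SSVM) with η > 0, and assume either ‖α*‖₀ < s, or ‖α*‖₀ = s together with η·max_i |g_i(α*, b*)| < ‖α*‖_[s]. Then there exists δ* > 0 such that for every (α, b) ∈ ℝ^m × ℝ with ‖(α,b) − (α*,b*)‖ < δ* and ‖α‖₀ ≤ s, and for every T ∈ T_s(α − η·g(α, b)), the following hold: g_i(α*, b*) = 0 for all i ∈ T, α*_j = 0 for all j ∉ T, and Σ_{i∈T} α*_i y_i = 0. -/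
noncomputable section

open Finset Matrix

/-- Lipschitz bound for the kink function t ↦ (if 0 ≤ t then 1/C else 1/c) * t. -/
lemma lipf_aux {c C : ℝ} (hc : 0 < c) (hcC : c < C) (t u : ℝ) :
    |(if 0 ≤ t then 1/C else 1/c) * t - (if 0 ≤ u then 1/C else 1/c) * u| ≤ (1/c) * |t - u| := by
  have hC : 0 < C := hc.trans hcC
  have h1 : 1/C ≤ 1/c := one_div_le_one_div_of_le hc hcC.le
  have h2 : (0:ℝ) < 1/c := by positivity
  have h3 : (0:ℝ) < 1/C := by positivity
  rcases le_or_gt 0 t with ht | ht <;> rcases le_or_gt 0 u with hu | hu <;>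
    simp only [if_pos, if_neg, not_le, ht, hu] <;>
    cases' abs_cases (t - u) with h h <;> rw [h.1] <;> rw [abs_le] <;>
    constructor <;> nlinarith [h.2]

lemma gfun_apply_aux {m n : ℕ} (c C : ℝ) (x : Fin m → Fin n → ℝ) (y : Fin m → ℝ)
    (α : Fin m → ℝ) (b : ℝ) (i : Fin m) :
    gfun c C x y α b i = (((Qmat x y)ᵀ * Qmat x y).mulVec α) i
      + (if 0 ≤ α i then 1/C else 1/c) * α i - 1 + b * y i := by
  simp [gfun, Hmat, Matrix.add_mulVec, Emat, Matrix.mulVec_diagonal, Pi.add_apply, Pi.sub_apply,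
    Pi.smul_apply, smul_eq_mul]

set_option maxHeartbeats 1000000 in
/-- Lemma 2 b: the stationary equations hold at (α*, b*) for every index set
T ∈ T_s(α − η·g(α,b)) with (α,b) near (α*,b*). -/
theorem stmt_18 {m n : ℕ} (hm : 1 ≤ m) (hn : 1 ≤ n) (c C : ℝ) (hc : 0 < c) (hcC : c < C)
    (x : Fin m → Fin n → ℝ) (y : Fin m → ℝ) (hy : ∀ i, y i = 1 ∨ y i = -1)
    (s : ℕ) (hs1 : 1 ≤ s) (hs2 : s ≤ m) (η : ℝ) (hη : 0 < η)
    (αstar : Fin m → ℝ) (bstar : ℝ)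
    (hst : etaStat c C x y s η αstar bstar)
    (hcase : zeroNorm αstar < s ∨
      (zeroNorm αstar = s ∧
        η * (⨆ i, |gfun c C x y αstar bstar i|) < sthLargest s αstar)) :
    ∃ δ > (0 : ℝ), ∀ (α : Fin m → ℝ) (b : ℝ), pairDist α b αstar bstar < δ →
      zeroNorm α ≤ s →
      ∀ T ∈ Tsets s (α - η • gfun c C x y α b),
        (∀ i ∈ T, gfun c C x y αstar bstar i = 0) ∧
        (∀ j ∉ T, αstar j = 0) ∧
        (∑ i ∈ T, αstar i * y i = 0) := by
  classical
  obtain ⟨h1, hsumy⟩ := hst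
  simp only [hardThr, Set.mem_setOf_eq] at h1
  obtain ⟨hzα, hmin⟩ := h1
  set gs : Fin m → ℝ := gfun c C x y αstar bstar with hgs
  set vs : Fin m → ℝ := αstar - η • gs with hvsdef
  have hvs_apply : ∀ i, vs i = αstar i - η * gs i := fun i => rfl
  set supp : Finset (Fin m) := Finset.univ.filter (fun i => αstar i ≠ 0) with hsuppdef
  have hmem_supp : ∀ i, i ∈ supp ↔ αstar i ≠ 0 := by intro i; simp [hsuppdef]
  have hzn : zeroNorm αstar = supp.card := by
    simp only [zeroNorm]
    rw [show {i | αstar i ≠ 0} = (↑supp : Set (Fin m)) by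
      ext i; simp [hsuppdef], Set.ncard_coe_finset]
  have hsupp_card : supp.card ≤ s := hzn ▸ hzα
  -- Key consequence of stationarity
  have key : ∀ S : Finset (Fin m), supp ⊆ S → S.card ≤ s → ∀ i ∈ S, vs i = αstar i := by
    intro S hSsupp hScard
    set u : Fin m → ℝ := fun i => if i ∈ S then vs i else 0 with hu
    have hzu : zeroNorm u ≤ s := by
      refine le_trans ?_ hScard
      simp only [zeroNorm]
      rw [← Set.ncard_coe_finset S]
      refine Set.ncard_le_ncard ?_ (Finset.finite_toSet S)
      intro i hi
      simp only [Set.mem_setOf_eq, hu] at hi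
      by_contra h
      simp only [Finset.mem_coe] at h
      simp [h] at hi
    have hmin' := hmin u hzu
    have hsum : ∑ i, (αstar i - vs i)^2 ≤ ∑ i, (u i - vs i)^2 := by
      have h0 : (0:ℝ) ≤ ∑ i, (u i - vs i)^2 := by positivity
      refine (Real.sqrt_le_sqrt_iff (x := ∑ i, (αstar i - vs i)^2) h0).mp ?_
      simpa [_root_.enorm, Pi.sub_apply] using hmin'
    have hSsum : ∑ i ∈ S, (αstar i - vs i)^2
        = ∑ i, ((αstar i - vs i)^2 - (u i - vs i)^2) := by
      rw [← Finset.sum_subset (Finset.subset_univ S)]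
      · refine Finset.sum_congr rfl fun i hi => ?_
        simp [hu, hi]
      · intro i _ hi
        have hα0 : αstar i = 0 := by
          by_contra hne
          exact hi (hSsupp ((hmem_supp i).mpr hne))
        simp [hu, hi, hα0]
    have hle0 : ∑ i ∈ S, (αstar i - vs i)^2 ≤ 0 := by
      rw [hSsum, Finset.sum_sub_distrib]
      linarith
    intro i hi
    have hz := (Finset.sum_eq_zero_iff_of_nonneg (fun j _ => sq_nonneg (αstar j - vs j))).mp
      (le_antisymm hle0 (Finset.sum_nonneg fun j _ => sq_nonneg _)) i hi
    have := pow_eq_zero_iff (n := 2) (by norm_num) |>.mp hz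
    linarith
  have hg_supp : ∀ i ∈ supp, gs i = 0 := by
    intro i hi
    have h := key supp (Finset.Subset.refl _) hsupp_card i hi
    rw [hvs_apply] at h
    have : η * gs i = 0 := by linarith
    rcases mul_eq_zero.mp this with h' | h'
    · exact absurd h' (ne_of_gt hη)
    · exact h'
  -- case analysis: gather gap constant ε and the structural disjunction
  have hcases : (∀ i, gs i = 0) ∨ supp.card = s := by
    rcases hcase with h | h
    · left
      intro i
      have hcard : (insert i supp).card ≤ s := by
        refine le_trans (Finset.card_insert_le _ _) ?_
        rw [hzn] at h; omega
      have hk := key (insert i supp) (Finset.subset_insert _ _) hcard i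
        (Finset.mem_insert_self _ _)
      rw [hvs_apply] at hk
      have : η * gs i = 0 := by linarith
      rcases mul_eq_zero.mp this with h' | h'
      · exact absurd h' (ne_of_gt hη)
      · exact h'
    · right; rw [← hzn]; exact h.1
  have hgap : ∃ ε > (0:ℝ), ∀ i ∈ supp, ∀ j ∉ supp, |vs j| + ε < |vs i| - ε := by
    by_cases hne : supp.Nonempty
    case neg =>
      exact ⟨1, one_pos, fun i hi => absurd hi (by
        rw [Finset.not_nonempty_iff_eq_empty.mp hne]; exact Finset.notMem_empty i)⟩
    set ρ : ℝ := supp.inf' hne (fun i => |αstar i|) with hρdef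
    have hρpos : 0 < ρ := by
      rw [hρdef, Finset.lt_inf'_iff]
      intro i hi
      exact abs_pos.mpr ((hmem_supp i).mp hi)
    have hρle : ∀ i ∈ supp, ρ ≤ |αstar i| := fun i hi => Finset.inf'_le _ hi
    have hvs_supp : ∀ i ∈ supp, vs i = αstar i := by
      intro i hi; rw [hvs_apply, hg_supp i hi]; ring
    rcases hcases with hall | hcard_s
    · -- g* ≡ 0 : vs = αstar
      refine ⟨ρ/3, by linarith, fun i hi j hj => ?_⟩
      have hji : αstar j = 0 := by
        by_contra hne'; exact hj ((hmem_supp j).mpr hne')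
      have hvj : vs j = 0 := by rw [hvs_apply, hall j, hji]; ring
      have := hρle i hi
      rw [hvj, hvs_supp i hi, abs_zero]
      linarith
    · -- supp.card = s
      have hG : ∀ j, |gs j| ≤ ⨆ i, |gs i| :=
        fun j => le_ciSup (f := fun i => |gs i|) (Set.Finite.bddAbove (Set.finite_range _)) j
      set G : ℝ := ⨆ i, |gs i| with hGdef
      have hsth : sthLargest s αstar ≤ ρ := by
        refine Real.sSup_le (fun t ht => ?_) hρpos.le
        simp only [Set.mem_setOf_eq] at ht
        by_contra hlt
        push_neg at hlt
        obtain ⟨i0, hi0, hρeq⟩ := Finset.exists_mem_eq_inf' hne (fun i => |αstar i|)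
        have hsub : {i | t ≤ |αstar i|} ⊆ (↑(supp.erase i0) : Set (Fin m)) := by
          intro i hi
          simp only [Set.mem_setOf_eq] at hi
          simp only [Finset.coe_erase, Set.mem_diff, Set.mem_singleton_iff, Finset.mem_coe]
          constructor
          · refine (hmem_supp i).mpr fun h0 => ?_
            rw [h0, abs_zero] at hi
            linarith
          · rintro rfl
            rw [← hρeq] at hi
            linarith
        have hcard := Set.ncard_le_ncard hsub (Finset.finite_toSet _)
        rw [Set.ncard_coe_finset, Finset.card_erase_of_mem hi0, hcard_s] at hcard
        omega
      have hcase_sup : η * G < sthLargest s αstar := by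
        rcases hcase with h | h
        · rw [hzn] at h; omega
        · exact h.2
      have hρG : η * G < ρ := lt_of_lt_of_le hcase_sup hsth
      refine ⟨(ρ - η * G)/3, by linarith, fun i hi j hj => ?_⟩
      have hji : αstar j = 0 := by
        by_contra hne'; exact hj ((hmem_supp j).mpr hne')
      have hvj : |vs j| ≤ η * G := by
        rw [hvs_apply, hji]
        have : |0 - η * gs j| = η * |gs j| := by
          rw [zero_sub, abs_neg, abs_mul, abs_of_pos hη]
        rw [this]
        exact mul_le_mul_of_nonneg_left (hG j) hη.le
      have hvi := hρle i hi
      rw [hvs_supp i hi]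
      linarith
  obtain ⟨ε, hεpos, hgapε⟩ := hgap
  -- continuity constants
  set M : Matrix (Fin m) (Fin m) ℝ := (Qmat x y)ᵀ * Qmat x y with hMdef
  set K : ℝ := ∑ p, ∑ q, |M p q| with hKdef
  have hK0 : (0:ℝ) ≤ K := Finset.sum_nonneg fun p _ => Finset.sum_nonneg fun q _ => abs_nonneg _
  have hc1 : (0:ℝ) < 1/c := by positivity
  set L : ℝ := 1 + η * (K + 1/c + 1) with hLdef
  have hL0 : (0:ℝ) < L := by
    rw [hLdef]
    nlinarith [mul_pos hη (show (0:ℝ) < K + 1/c + 1 by linarith)]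
  refine ⟨ε / L, by positivity, ?_⟩
  intro α b hdist hαs T hT
  simp only [Tsets, Set.mem_setOf_eq] at hT
  set v : Fin m → ℝ := α - η • gfun c C x y α b with hvdef
  set d : ℝ := pairDist α b αstar bstar with hddef
  have hterm : ∀ j, (α j - αstar j)^2 ≤ (∑ i, (α i - αstar i)^2) + (b - bstar)^2 := by
    intro j
    have h1 : (α j - αstar j)^2 ≤ ∑ i, (α i - αstar i)^2 :=
      Finset.single_le_sum (f := fun i => (α i - αstar i)^2)
        (fun i _ => sq_nonneg _) (Finset.mem_univ j)
    nlinarith [sq_nonneg (b - bstar)]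
  have hαd : ∀ j, |α j - αstar j| ≤ d := by
    intro j
    rw [hddef]
    simp only [pairDist]
    rw [← Real.sqrt_sq_eq_abs]
    exact Real.sqrt_le_sqrt (hterm j)
  have hbd : |b - bstar| ≤ d := by
    rw [hddef]
    simp only [pairDist]
    rw [← Real.sqrt_sq_eq_abs]
    refine Real.sqrt_le_sqrt ?_
    have : (0:ℝ) ≤ ∑ i, (α i - αstar i)^2 := by positivity
    linarith
  have hd0 : 0 ≤ d := le_trans (abs_nonneg (b - bstar)) hbd
  -- componentwise closeness of v to vs
  have hvclose : ∀ i, |v i - vs i| < ε := by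
    intro i
    have hrow : ∑ q, |M i q| ≤ K := by
      refine Finset.single_le_sum (f := fun p => ∑ q, |M p q|)
        (fun p _ => Finset.sum_nonneg fun q _ => abs_nonneg _) (Finset.mem_univ i)
    have hmv : |M.mulVec α i - M.mulVec αstar i| ≤ K * d := by
      have heq : M.mulVec α i - M.mulVec αstar i = ∑ q, M i q * (α q - αstar q) := by
        simp only [Matrix.mulVec, dotProduct]
        rw [← Finset.sum_sub_distrib]
        exact Finset.sum_congr rfl fun q _ => by ring
      rw [heq]
      calc |∑ q, M i q * (α q - αstar q)| ≤ ∑ q, |M i q * (α q - αstar q)| :=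
            Finset.abs_sum_le_sum_abs _ _
        _ ≤ ∑ q, |M i q| * d := by
            refine Finset.sum_le_sum fun q _ => ?_
            rw [abs_mul]
            exact mul_le_mul_of_nonneg_left (hαd q) (abs_nonneg _)
        _ = (∑ q, |M i q|) * d := by rw [Finset.sum_mul]
        _ ≤ K * d := mul_le_mul_of_nonneg_right hrow hd0
    have hkink : |(if 0 ≤ α i then 1/C else 1/c) * α i
        - (if 0 ≤ αstar i then 1/C else 1/c) * αstar i| ≤ (1/c) * d :=
      le_trans (lipf_aux hc hcC (α i) (αstar i))
        (mul_le_mul_of_nonneg_left (hαd i) hc1.le)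
    have hyi : |y i| = 1 := by rcases hy i with h | h <;> rw [h] <;> norm_num
    have hby : |b * y i - bstar * y i| ≤ d := by
      rw [← sub_mul, abs_mul, hyi, mul_one]
      exact hbd
    have hgdiff : |gfun c C x y α b i - gs i| ≤ K * d + (1/c) * d + d := by
      rw [hgs, gfun_apply_aux, gfun_apply_aux, ← hMdef]
      have : M.mulVec α i + (if 0 ≤ α i then 1/C else 1/c) * α i - 1 + b * y i
          - (M.mulVec αstar i + (if 0 ≤ αstar i then 1/C else 1/c) * αstar i - 1
            + bstar * y i)
          = (M.mulVec α i - M.mulVec αstar i)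
            + ((if 0 ≤ α i then 1/C else 1/c) * α i
              - (if 0 ≤ αstar i then 1/C else 1/c) * αstar i)
            + (b * y i - bstar * y i) := by ring
      rw [this]
      refine le_trans (abs_add_le _ _) ?_
      have t2 := abs_add_le (M.mulVec α i - M.mulVec αstar i)
        ((if 0 ≤ α i then 1/C else 1/c) * α i
          - (if 0 ≤ αstar i then 1/C else 1/c) * αstar i)
      linarith
    have hvd : v i - vs i = (α i - αstar i) - η * (gfun c C x y α b i - gs i) := by
      rw [hvs_apply]
      simp only [hvdef, Pi.sub_apply, Pi.smul_apply, smul_eq_mul]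
      ring
    have hdL : d < ε / L := hdist
    have hLd : L * d < ε := by
      have h := (lt_div_iff₀ hL0).mp hdist
      linarith
    calc |v i - vs i| ≤ |α i - αstar i| + η * |gfun c C x y α b i - gs i| := by
          rw [hvd]
          refine le_trans (abs_sub _ _) ?_
          rw [abs_mul, abs_of_pos hη]
        _ ≤ d + η * (K * d + (1/c) * d + d) := by
          gcongr
          exact hαd i
        _ = L * d := by rw [hLdef]; ring
        _ < ε := hLd
  -- supp ⊆ T
  have hsuppT : supp ⊆ T := by
    intro i0 hi0
    by_contra hi0T
    have hinter : T ∩ supp ⊆ supp.erase i0 := by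
      intro j hj
      rw [Finset.mem_erase]
      refine ⟨fun h => hi0T (h ▸ (Finset.mem_inter.mp hj).1), (Finset.mem_inter.mp hj).2⟩
    have hci := Finset.card_le_card hinter
    rw [Finset.card_erase_of_mem hi0] at hci
    have hsupp_pos : 1 ≤ supp.card := Finset.card_pos.mpr ⟨i0, hi0⟩
    obtain ⟨j, hjT, hjsupp⟩ : ∃ j ∈ T, j ∉ supp := by
      by_contra h
      push_neg at h
      have hTsub : T ⊆ supp := h
      have : T ∩ supp = T := Finset.inter_eq_left.mpr hTsub
      rw [this] at hci
      have := hT.1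
      omega
    have hle := hT.2 j hjT i0 hi0T
    have h1 : |vs i0| - ε < |v i0| := by
      have h := hvclose i0
      have := abs_sub_abs_le_abs_sub (vs i0) (v i0)
      rw [abs_sub_comm] at this
      linarith
    have h2 : |v j| < |vs j| + ε := by
      have h := hvclose j
      have := abs_sub_abs_le_abs_sub (v j) (vs j)
      linarith
    have h3 := hgapε i0 hi0 j hjsupp
    linarith
  have hnotT : ∀ j ∉ T, αstar j = 0 := by
    intro j hj
    by_contra hne
    exact hj (hsuppT ((hmem_supp j).mpr hne))
  refine ⟨?_, hnotT, ?_⟩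
  · intro i hi
    rcases hcases with hall | hcard_s
    · exact hall i
    · have hTsupp : T = supp :=
        (Finset.eq_of_subset_of_card_le hsuppT (by rw [hT.1, ← hcard_s])).symm
      exact hg_supp i (hTsupp ▸ hi)
  · rw [Finset.sum_subset (Finset.subset_univ T)
      (fun j _ hj => by rw [hnotT j hj, zero_mul])]
    exact hsumy
end
end
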